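/- Let σ = (T₁,…,T_M) be a feasible m-machine schedule of a DAG G, let s ∈ T_i be a sink of G, and let v ∈ T_j be a job with j > i such that all predecessors of v lie in T₁ ∪ … ∪ T_{i-1}. Then the schedule obtained by swapping s and v (placing v in T_i and s in T_j) is feasible and has the same makespan. -/

import Mathlib

/-- A feasible `m`-machine schedule of the job set `X`: a list of timeslots,
each of size at most `m`, pairwise disjoint, covering exactly `X`, such that
whenever `prec u v`, job `u` is scheduled in a strictly earlier timeslot. -/
def IsSchedule {V : Type*} (prec : V → V → Prop) (m : ℕ)
    (X : Finset V) (σ : List (Finset V)) : Prop :=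
  (∀ T ∈ σ, T.card ≤ m) ∧
  (∀ v, v ∈ X ↔ ∃ i : Fin σ.length, v ∈ σ.get i) ∧
  (∀ i j : Fin σ.length, i ≠ j → Disjoint (σ.get i) (σ.get j)) ∧
  (∀ i j : Fin σ.length, ∀ u ∈ σ.get i, ∀ v ∈ σ.get j, prec u v → (i : ℕ) < (j : ℕ))

/-- Swapping a sink `s ∈ T_i` with a job `v ∈ T_j` (`j > i`) all of whose
predecessors are scheduled strictly before timeslot `i` yields a feasible
schedule with the same makespan. -/
theorem stmt4 {V : Type*} [Fintype V] [DecidableEq V]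
    (prec : V → V → Prop) (htrans : Transitive prec) (hirr : Irreflexive prec)
    (m : ℕ) (σ : List (Finset V)) (hfeas : IsSchedule prec m Finset.univ σ)
    (i j : Fin σ.length) (hij : (i : ℕ) < (j : ℕ)) (s v : V)
    (hs : s ∈ σ.get i) (hsink : ∀ u : V, ¬ prec s u)
    (hv : v ∈ σ.get j)
    (hpred : ∀ u : V, prec u v → ∃ k : Fin σ.length, (k : ℕ) < (i : ℕ) ∧ u ∈ σ.get k)
    (σ' : List (Finset V))
    (hσ' : σ' = (σ.set (i : ℕ) (insert v ((σ.get i).erase s))).set (j : ℕ)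
        (insert s ((σ.get j).erase v))) :
    IsSchedule prec m Finset.univ σ' ∧ σ'.length = σ.length := by
  classical
  obtain ⟨hm, hcov, hdisj, hprec⟩ := hfeas
  have hij' : i ≠ j := Fin.ne_of_val_ne (Nat.ne_of_lt hij)
  have hdis_ij := hdisj i j hij'
  have hsv : s ≠ v := by
    intro h
    exact (Finset.disjoint_left.mp hdis_ij hs) (h ▸ hv)
  have hvTi : v ∉ σ.get i := fun h => (Finset.disjoint_left.mp hdis_ij h) hv
  have hsTj : s ∉ σ.get j := fun h => (Finset.disjoint_left.mp hdis_ij hs) h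
  have hlen : σ'.length = σ.length := by simp [hσ']
  have hsNot : ∀ (k : ℕ) (hk : k < σ.length), k ≠ (i : ℕ) → s ∉ σ[k] := by
    intro k hk hne hmem
    exact (Finset.disjoint_left.mp (hdisj ⟨k, hk⟩ i (by simpa [Fin.ext_iff] using hne))
      (by simpa using hmem)) hs
  have hvNot : ∀ (k : ℕ) (hk : k < σ.length), k ≠ (j : ℕ) → v ∉ σ[k] := by
    intro k hk hne hmem
    exact (Finset.disjoint_left.mp (hdisj ⟨k, hk⟩ j (by simpa [Fin.ext_iff] using hne))
      (by simpa using hmem)) hv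
  have hget : ∀ (k : ℕ) (hk : k < σ.length),
      σ'[k]'(hlen ▸ hk) =
        if (j : ℕ) = k then insert s ((σ.get j).erase v)
        else if (i : ℕ) = k then insert v ((σ.get i).erase s)
        else σ[k] := by
    intro k hk
    subst hσ'
    rw [List.getElem_set, List.getElem_set]
  have hmem : ∀ (k : ℕ) (hk : k < σ.length) (w : V),
      w ∈ σ'[k]'(hlen ▸ hk) ↔
        ((w = s ∧ k = (j : ℕ)) ∨ (w = v ∧ k = (i : ℕ)) ∨
          (w ≠ s ∧ w ≠ v ∧ w ∈ σ[k])) := by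
    intro k hk w
    rw [hget k hk]
    split_ifs with h1 h2
    · subst h1
      simp only [Finset.mem_insert, Finset.mem_erase]
      constructor
      · rintro (rfl | ⟨hwv, hw⟩)
        · exact Or.inl ⟨rfl, trivial⟩
        · refine Or.inr (Or.inr ⟨?_, hwv, by simpa using hw⟩)
          rintro rfl; exact hsTj hw
      · rintro (⟨rfl, -⟩ | ⟨rfl, hki⟩ | ⟨-, hwv, hw⟩)
        · exact Or.inl rfl
        · exact absurd hki.symm (Nat.ne_of_lt hij)
        · exact Or.inr ⟨hwv, by simpa using hw⟩
    · subst h2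
      simp only [Finset.mem_insert, Finset.mem_erase]
      constructor
      · rintro (rfl | ⟨hws, hw⟩)
        · exact Or.inr (Or.inl ⟨rfl, trivial⟩)
        · refine Or.inr (Or.inr ⟨hws, ?_, by simpa using hw⟩)
          rintro rfl; exact hvTi hw
      · rintro (⟨rfl, hkj⟩ | ⟨rfl, -⟩ | ⟨hws, -, hw⟩)
        · exact absurd hkj.symm h1
        · exact Or.inl rfl
        · exact Or.inr ⟨hws, by simpa using hw⟩
    · constructor
      · intro hw
        refine Or.inr (Or.inr ⟨?_, ?_, hw⟩)
        · rintro rfl; exact hsNot k hk (Ne.symm h2) hw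
        · rintro rfl; exact hvNot k hk (Ne.symm h1) hw
      · rintro (⟨rfl, hkj⟩ | ⟨rfl, hki⟩ | ⟨-, -, hw⟩)
        · exact absurd hkj.symm h1
        · exact absurd hki.symm h2
        · exact hw
  refine ⟨⟨?_, ?_, ?_, ?_⟩, hlen⟩
  · -- cards
    intro T hT
    obtain ⟨k, hk, rfl⟩ := List.mem_iff_getElem.mp hT
    have hk' : k < σ.length := hlen ▸ hk
    rw [show σ'[k]'hk = σ'[k]'(hlen ▸ hk') from rfl, hget k hk']
    split_ifs with h1 h2
    · have hpos : 0 < (σ.get j).card := Finset.card_pos.mpr ⟨v, hv⟩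
      have hcard := hm (σ.get j) (List.get_mem σ j)
      rw [Finset.card_insert_of_notMem (fun h => hsTj (Finset.mem_of_mem_erase h)),
        Finset.card_erase_of_mem hv]
      omega
    · have hpos : 0 < (σ.get i).card := Finset.card_pos.mpr ⟨s, hs⟩
      have hcard := hm (σ.get i) (List.get_mem σ i)
      rw [Finset.card_insert_of_notMem (fun h => hvTi (Finset.mem_of_mem_erase h)),
        Finset.card_erase_of_mem hs]
      omega
    · exact hm _ (List.getElem_mem hk')
  · -- coverage
    intro w
    simp only [Finset.mem_univ, true_iff]
    by_cases hws : w = s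
    · subst hws
      refine ⟨⟨(j : ℕ), by have := j.isLt; omega⟩, ?_⟩
      rw [List.get_eq_getElem]
      exact (hmem j j.isLt w).mpr (Or.inl ⟨rfl, rfl⟩)
    · by_cases hwv : w = v
      · subst hwv
        refine ⟨⟨(i : ℕ), by have := i.isLt; omega⟩, ?_⟩
        rw [List.get_eq_getElem]
        exact (hmem i i.isLt w).mpr (Or.inr (Or.inl ⟨rfl, rfl⟩))
      · obtain ⟨k, hk⟩ := (hcov w).mp (Finset.mem_univ w)
        refine ⟨⟨(k : ℕ), by have := k.isLt; omega⟩, ?_⟩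
        rw [List.get_eq_getElem]
        exact (hmem k k.isLt w).mpr (Or.inr (Or.inr ⟨hws, hwv, by simpa using hk⟩))
  · -- disjoint
    intro k l hkl
    have hk : (k : ℕ) < σ.length := hlen ▸ k.isLt
    have hl : (l : ℕ) < σ.length := hlen ▸ l.isLt
    have hkl' : (k : ℕ) ≠ (l : ℕ) := fun h => hkl (Fin.ext h)
    rw [Finset.disjoint_left]
    intro x hx hx'
    rw [List.get_eq_getElem] at hx hx'
    rcases (hmem k hk x).mp hx with ⟨rfl, hkj⟩ | ⟨rfl, hki⟩ | ⟨hxs, hxv, hxk⟩ <;>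
      rcases (hmem l hl x).mp hx' with ⟨h1, h2⟩ | ⟨h1, h2⟩ | ⟨h1, h2, h3⟩
    · exact hkl' (hkj.trans h2.symm)
    · exact hsv h1
    · exact h1 rfl
    · exact hsv h1.symm
    · exact hkl' (hki.trans h2.symm)
    · exact h2 rfl
    · exact hxs h1
    · exact hxv h1
    · exact (Finset.disjoint_left.mp
        (hdisj ⟨k, hk⟩ ⟨l, hl⟩ (by simpa [Fin.ext_iff] using hkl')) hxk) h3
  · -- precedence
    intro k l u hu w hw hpw
    have hk : (k : ℕ) < σ.length := hlen ▸ k.isLt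
    have hl : (l : ℕ) < σ.length := hlen ▸ l.isLt
    rw [List.get_eq_getElem] at hu hw
    rcases (hmem k hk u).mp hu with ⟨hus', hkj⟩ | ⟨huv', hki⟩ | ⟨hus, huv, huk⟩
    · exact absurd hpw (hus' ▸ hsink w)
    · rcases (hmem l hl w).mp hw with ⟨hws', hlj⟩ | ⟨hwv', hli⟩ | ⟨hws, hwv, hwl⟩
      · omega
      · rw [huv', hwv'] at hpw
        exact absurd hpw (hirr v)
      · rw [huv'] at hpw
        have h5 : (j : ℕ) < (l : ℕ) := hprec j ⟨l, hl⟩ v hv w (by simpa using hwl) hpw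
        omega
    · rcases (hmem l hl w).mp hw with ⟨hws', hlj⟩ | ⟨hwv', hli⟩ | ⟨hws, hwv, hwl⟩
      · rw [hws'] at hpw
        have h5 : (k : ℕ) < (i : ℕ) := hprec ⟨k, hk⟩ i u (by simpa using huk) s hs hpw
        omega
      · rw [hwv'] at hpw
        obtain ⟨k₀, hk₀i, hu₀⟩ := hpred u hpw
        have hkk : k₀ = ⟨k, hk⟩ := by
          by_contra hne
          exact (Finset.disjoint_left.mp (hdisj k₀ ⟨k, hk⟩ hne) hu₀) (by simpa using huk)
        have h5 : (k : ℕ) < (i : ℕ) := by rw [hkk] at hk₀i; exact hk₀i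
        omega
      · exact hprec ⟨k, hk⟩ ⟨l, hl⟩ u (by simpa using huk) w (by simpa using hwl) hpw
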